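/- Let L be the (K,D) AIR matrix. If the entry L(j,k)=1 lies in the odd-submatrix I_{β_{2i+1}λ_{2i+1} × λ_{2i+1}} for some i ∈ [0, ⌈l/2⌉−1], then the up-distance of L(j,k) equals λ_{2i+1}; that is, j − λ_{2i+1} is the largest row index j′ < j with L(j′,k)=1. -/
import Mathlib

/-- Entry (j,k) of the AIR matrix of size K × n (n = K - D), as a Boolean. -/
def airEntry : ℕ → ℕ → ℕ → ℕ → Bool
  | K, n, j, k =>
    if h : n = 0 ∨ K ≤ n then decide (j = k)
    else
      if j < K - K % n then decide (j % n = k % n)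
      else
        if k < n - n % (K % n) then decide (k % (K % n) = j - (K - K % n))
        else airEntry (K % n) (n % (K % n)) (j - (K - K % n)) (k - (n - n % (K % n)))
  termination_by K n _ _ => K
  decreasing_by
    push_neg at h
    exact lt_trans (Nat.mod_lt _ (Nat.pos_of_ne_zero h.1)) h.2

/-- The pair (λ_{i-1}, λ_i) of the Euclidean chain, with λ_{-1} = K - D and λ₀ = D. -/
def lamPair (K D : ℕ) : ℕ → ℕ × ℕ
  | 0 => (K - D, D)
  | i + 1 =>
    let p := lamPair K D i
    (p.2, if p.2 = 0 then 0 else p.1 % p.2)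

/-- λ_i of the Euclidean chain. -/
def lam (K D i : ℕ) : ℕ := (lamPair K D i).2

/-- λ_{i-1} of the Euclidean chain (so `lamS K D 0 = K - D`). -/
def lamS (K D i : ℕ) : ℕ := (lamPair K D i).1

/-- β_i = λ_{i-1} / λ_i of the Euclidean chain. -/
def beta (K D i : ℕ) : ℕ := (lamPair K D i).1 / (lamPair K D i).2

/-- down-distance of the diagonal entry L(k,k) of the K × n AIR matrix. -/
noncomputable def ddown (K n k : ℕ) : ℕ :=
  sSup {t : ℕ | 0 < t ∧ k + t < K ∧ airEntry K n (k + t) k = true}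

/-- up-distance of the entry L(j,k) of the K × n AIR matrix. -/
noncomputable def dup (K n j k : ℕ) : ℕ :=
  j - sSup {j' : ℕ | j' < j ∧ airEntry K n j' k = true}

/-- right-distance of the entry L(j,k) of the K × n AIR matrix. -/
noncomputable def dright (K n j k : ℕ) : ℕ :=
  sInf {t : ℕ | 0 < t ∧ k + t < n ∧ airEntry K n j (k + t) = true}

/-! ### Auxiliary machinery -/

/-- The chain ν₀ = K - n, ν₁ = n, ν_{s+2} = ν_s % ν_{s+1}. -/
def nuP (K n : ℕ) : ℕ → ℕ × ℕ
  | 0 => (K - n, n)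
  | j + 1 => ((nuP K n j).2, (nuP K n j).1 % (nuP K n j).2)

def nu (K n j : ℕ) : ℕ := (nuP K n j).1

lemma nu_zero (K n : ℕ) : nu K n 0 = K - n := rfl
lemma nu_one (K n : ℕ) : nu K n 1 = n := rfl
lemma nu_rec (K n j : ℕ) : nu K n (j + 2) = nu K n j % nu K n (j + 1) := rfl

lemma nu_two {K n : ℕ} (h : n ≤ K) : nu K n 2 = K % n := by
  show (K - n) % n = K % n
  conv_rhs => rw [← Nat.sub_add_cancel h, Nat.add_mod_right]

lemma nu_three {K n : ℕ} (h : n ≤ K) : nu K n 3 = n % (K % n) := by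
  have : nu K n 3 = nu K n 1 % nu K n 2 := rfl
  rw [this, nu_one, nu_two h]

lemma airEntry_top {K n j k : ℕ} (h0 : 0 < n) (h1 : n < K) (hj : j < K - K % n) :
    airEntry K n j k = decide (j % n = k % n) := by
  rw [airEntry]
  rw [dif_neg (by omega : ¬(n = 0 ∨ K ≤ n)), if_pos hj]

lemma airEntry_rec' {K n j k : ℕ} (h0 : 0 < n) (h1 : n < K) (hj : K - K % n ≤ j)
    (hk : n - n % (K % n) ≤ k) :
    airEntry K n j k
      = airEntry (K % n) (n % (K % n)) (j - (K - K % n)) (k - (n - n % (K % n))) := by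
  rw [airEntry]
  rw [dif_neg (by omega : ¬(n = 0 ∨ K ≤ n)), if_neg (by omega), if_neg (by omega)]

lemma nu_succ_lt {K n : ℕ} (s : ℕ) (hs : 1 ≤ s) (h : 0 < nu K n s) :
    nu K n (s + 1) < nu K n s := by
  obtain ⟨j, rfl⟩ : ∃ j, s = j + 1 := ⟨s - 1, by omega⟩
  rw [show j + 1 + 1 = j + 2 from rfl, nu_rec]
  exact Nat.mod_lt _ h

lemma nu_mono {K n c : ℕ} (hpos : ∀ s ≤ c, 0 < nu K n s) :
    ∀ a b, 1 ≤ a → a ≤ b → b ≤ c + 1 → nu K n b ≤ nu K n a := by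
  intro a b ha hab hbc
  induction b with
  | zero => omega
  | succ b ih =>
    rcases Nat.lt_or_ge a (b + 1) with h | h
    · have h1 := ih (by omega) (by omega)
      have h2 : nu K n (b + 1) < nu K n b := nu_succ_lt b (by omega) (hpos b (by omega))
      omega
    · have : a = b + 1 := by omega
      rw [this]

lemma sub_mod_self {a b : ℕ} (h : b ≤ a) : (a - b) % b = a % b := by
  conv_rhs => rw [← Nat.sub_add_cancel h, Nat.add_mod_right]

lemma nu_shift {K n : ℕ} (h1 : n ≤ K) (hm : 0 < K % n) :
    ∀ s, nu (K % n) (n % (K % n)) (s + 1) = nu K n (s + 3) := by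
  have e3 : nu K n 3 = n % (K % n) := nu_three h1
  have e4 : nu K n 4 = (K % n) % (n % (K % n)) := by
    rw [show (4 : ℕ) = 2 + 2 from rfl, nu_rec, nu_two h1, ← nu_three h1]
  have key : ∀ s, nu (K % n) (n % (K % n)) (s + 1) = nu K n (s + 3) ∧
      nu (K % n) (n % (K % n)) (s + 2) = nu K n (s + 4) := by
    intro s
    induction s with
    | zero =>
      constructor
      · show n % (K % n) = nu K n 3
        exact e3.symm
      · show (K % n - n % (K % n)) % (n % (K % n)) = nu K n 4
        have hle : n % (K % n) ≤ K % n := le_of_lt (Nat.mod_lt _ hm)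
        rw [e4, sub_mod_self hle]
    | succ s ih =>
      obtain ⟨ih1, ih2⟩ := ih
      refine ⟨ih2, ?_⟩
      calc nu (K % n) (n % (K % n)) (s + 1 + 2)
          = nu (K % n) (n % (K % n)) (s + 1) % nu (K % n) (n % (K % n)) (s + 1 + 1) :=
            nu_rec _ _ (s + 1)
        _ = nu K n (s + 3) % nu K n (s + 4) := by
            rw [show s + 1 + 1 = s + 2 from rfl, ih1, ih2]
        _ = nu K n (s + 3 + 2) := by
            rw [nu_rec _ _ (s + 3), show s + 3 + 1 = s + 4 from rfl]
        _ = nu K n (s + 1 + 4) := rfl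
  exact fun s => (key s).1

lemma mod_le_helper {n a b : ℕ} (h0 : 0 < n) (hm : a % n = b % n) (hlt : a < b) :
    a + n ≤ b := by
  have h1 : n ∣ b - a := Nat.dvd_of_mod_eq_zero (Nat.sub_mod_eq_zero_of_mod_eq hm.symm)
  have h2 : n ≤ b - a := Nat.le_of_dvd (by omega) h1
  omega

lemma q_mod (K n : ℕ) : (K - K % n) % n = 0 := by
  have h2 := Nat.div_add_mod K n
  have h : K - K % n = n * (K / n) := by omega
  rw [h]
  exact Nat.mul_mod_right _ _

lemma n_le_q {K n : ℕ} (h0 : 0 < n) (h1 : n < K) : n ≤ K - K % n := by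
  have h2 : K % n < n := Nat.mod_lt _ h0
  exact Nat.le_of_dvd (by omega) (Nat.dvd_of_mod_eq_zero (q_mod K n))

lemma mod_below {n q k j' : ℕ} (h0 : 0 < n) (hq : q % n = 0) (hqn : n ≤ q) (hj : j' < q)
    (hk : k < n) (hmod : j' % n = k) : j' ≤ q - n + k := by
  have h1 : (q + k) % n = k % n := by
    rw [Nat.add_mod, hq, Nat.zero_add, Nat.mod_mod_of_dvd _ dvd_rfl]
  have h2 : j' % n = (q + k) % n := by
    rw [h1, Nat.mod_eq_of_lt hk, hmod]
  have h3 : j' < q + k := by omega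
  have := mod_le_helper h0 h2 h3
  omega

/-- Main structural lemma: for an entry of the odd submatrix at level `t`,
the previous 1 in the same column is exactly `nu K n (2t+1)` rows above. -/
lemma air_up : ∀ t K n j k : ℕ, 0 < n → n < K →
    (∀ s ≤ 2 * t + 1, 0 < nu K n s) →
    K - nu K n (2 * t) ≤ j → j < K - nu K n (2 * t + 2) →
    n - nu K n (2 * t + 1) ≤ k → k < n →
    airEntry K n j k = true →
    nu K n (2 * t + 1) ≤ j ∧ airEntry K n (j - nu K n (2 * t + 1)) k = true ∧
      ∀ j' : ℕ, j' < j → airEntry K n j' k = true → j' ≤ j - nu K n (2 * t + 1) := by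
  intro t
  induction t with
  | zero =>
    intro K n j k h0 h1 hpos hj1 hj2 hk1 hk2 he
    rw [show 2 * 0 = 0 from rfl] at hj1
    rw [show 2 * 0 + 2 = 2 from rfl] at hj2
    rw [show 2 * 0 + 1 = 1 from rfl] at hk1 ⊢
    rw [nu_zero] at hj1
    rw [nu_two h1.le] at hj2
    rw [nu_one] at hk1 ⊢
    have hjn : n ≤ j := by omega
    have he' : j % n = k % n := by
      rw [airEntry_top h0 h1 hj2] at he
      exact of_decide_eq_true he
    refine ⟨hjn, ?_, ?_⟩
    · rw [airEntry_top h0 h1 (by omega : j - n < K - K % n)]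
      rw [sub_mod_self hjn, he']
      exact decide_eq_true rfl
    · intro j' hj' he2
      rw [airEntry_top h0 h1 (by omega : j' < K - K % n)] at he2
      have h2 : j' % n = j % n := by rw [of_decide_eq_true he2, he']
      have := mod_le_helper h0 h2 hj'
      omega
  | succ t ih =>
    intro K n j k h0 h1 hpos hj1 hj2 hk1 hk2 he
    rw [show 2 * (t + 1) = 2 * t + 2 from by ring] at hj1
    rw [show 2 * (t + 1) + 2 = 2 * t + 4 from by ring] at hj2
    rw [show 2 * (t + 1) + 1 = 2 * t + 3 from by ring] at hk1 ⊢
    have hm0 : 0 < K % n := by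
      have := hpos 2 (by omega); rwa [nu_two h1.le] at this
    have hn'0 : 0 < n % (K % n) := by
      have := hpos 3 (by omega); rwa [nu_three h1.le] at this
    have hn'm : n % (K % n) < K % n := Nat.mod_lt _ hm0
    have hmn : K % n < n := Nat.mod_lt _ h0
    have hnq : n ≤ K - K % n := n_le_q h0 h1
    have hmono := nu_mono (K := K) (n := n) (c := 2 * t + 3) hpos
    have h2t2 : nu K n (2 * t + 2) ≤ K % n := by
      have := hmono 2 (2 * t + 2) (by omega) (by omega) (by omega)
      rwa [nu_two h1.le] at this
    have h2t3 : nu K n (2 * t + 3) ≤ n % (K % n) := by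
      have := hmono 3 (2 * t + 3) (by omega) (by omega) (by omega)
      rwa [nu_three h1.le] at this
    have h2t4 : nu K n (2 * t + 4) ≤ K % n := by
      have := hmono 2 (2 * t + 4) (by omega) (by omega) (by omega)
      rwa [nu_two h1.le] at this
    have hqj : K - K % n ≤ j := by omega
    have hpk : n - n % (K % n) ≤ k := by omega
    have hsh := nu_shift h1.le hm0
    have herec := airEntry_rec' h0 h1 hqj hpk
    rw [herec] at he
    by_cases hr : K % n - nu (K % n) (n % (K % n)) (2 * t) ≤ j - (K - K % n)
    · -- inner case : apply induction hypothesis to the recursive submatrix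
      have hpos' : ∀ s ≤ 2 * t + 1, 0 < nu (K % n) (n % (K % n)) s := by
        intro s hs
        obtain _ | s := s
        · rw [nu_zero]; omega
        · rw [hsh s]; exact hpos (s + 3) (by omega)
      have e1 : nu (K % n) (n % (K % n)) (2 * t + 1) = nu K n (2 * t + 3) := hsh (2 * t)
      have e2 : nu (K % n) (n % (K % n)) (2 * t + 2) = nu K n (2 * t + 4) := hsh (2 * t + 1)
      obtain ⟨g1, g2, g3⟩ := ih (K % n) (n % (K % n)) (j - (K - K % n))
        (k - (n - n % (K % n))) hn'0 hn'm hpos' hr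
        (by rw [e2]; omega) (by rw [e1]; omega) (by omega) he
      rw [e1] at g1 g2 g3
      have hνr : nu K n (2 * t + 3) ≤ j - (K - K % n) := g1
      refine ⟨by omega, ?_, ?_⟩
      · rw [airEntry_rec' h0 h1 (by omega) hpk]
        have : j - nu K n (2 * t + 3) - (K - K % n)
            = j - (K - K % n) - nu K n (2 * t + 3) := by omega
        rw [this]
        exact g2
      · intro j' hj' he2
        by_cases hq' : K - K % n ≤ j'
        · rw [airEntry_rec' h0 h1 hq' hpk] at he2
          have := g3 (j' - (K - K % n)) (by omega) he2
          omega
        · omega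
    · -- crossing case : necessarily t = 0, and the previous 1 is in the top part
      have hnu0' : nu (K % n) (n % (K % n)) 0 = K % n - n % (K % n) := rfl
      obtain _ | t' := t
      swap
      · exfalso
        apply hr
        rw [show 2 * (t' + 1) = (2 * t' + 1) + 1 from by ring, hsh (2 * t' + 1),
          show 2 * t' + 1 + 3 = 2 * (t' + 1) + 2 from by ring]
        omega
      · rw [show 2 * 0 = 0 from rfl, hnu0'] at hr
        have hrn' : j - (K - K % n) < n % (K % n) := by omega
        rw [show 2 * 0 + 3 = 3 from rfl] at *
        have hν : nu K n 3 = n % (K % n) := nu_three h1.le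
        rw [hν]
        -- the sub-entry is in the first copy of the identity stack of the submatrix
        have hq'sub : n % (K % n) ≤ K % n - (K % n) % (n % (K % n)) := n_le_q hn'0 hn'm
        have hcn' : k - (n - n % (K % n)) < n % (K % n) := by omega
        rw [airEntry_top hn'0 hn'm (by omega)] at he
        have heq : j - (K - K % n) = k - (n - n % (K % n)) := by
          have := of_decide_eq_true he
          rwa [Nat.mod_eq_of_lt hrn', Nat.mod_eq_of_lt hcn'] at this
        have hjk : j - n % (K % n) = (K - K % n) - n + k := by omega
        refine ⟨by omega, ?_, ?_⟩
        · rw [hjk, airEntry_top h0 h1 (by omega)]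
          have h2 : ((K - K % n) - n + k) % n = k % n := by
            have h3 : ((K - K % n) - n + k) % n = ((K - K % n) + k) % n := by
              conv_rhs => rw [show K - K % n + k = K - K % n - n + k + n from by omega,
                Nat.add_mod_right]
            rw [h3, Nat.add_mod, q_mod, Nat.zero_add, Nat.mod_mod_of_dvd _ dvd_rfl]
          rw [h2]
          exact decide_eq_true rfl
        · intro j' hj' he2
          by_cases hq' : K - K % n ≤ j'
          · exfalso
            rw [airEntry_rec' h0 h1 hq' hpk] at he2
            rw [airEntry_top hn'0 hn'm (by omega)] at he2
            have := of_decide_eq_true he2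
            rw [Nat.mod_eq_of_lt (by omega : j' - (K - K % n) < n % (K % n)),
              Nat.mod_eq_of_lt hcn'] at this
            omega
          · rw [airEntry_top h0 h1 (by omega)] at he2
            have h2 : j' % n = k := by
              rw [of_decide_eq_true he2, Nat.mod_eq_of_lt hk2]
            have := mod_below h0 (q_mod K n) hnq (by omega) hk2 h2
            omega

lemma dup_eq {K n j k ν : ℕ} (h1 : ν ≤ j) (h0 : 0 < ν)
    (h2 : airEntry K n (j - ν) k = true)
    (h3 : ∀ j' : ℕ, j' < j → airEntry K n j' k = true → j' ≤ j - ν) :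
    dup K n j k = ν := by
  have hg : IsGreatest {j' : ℕ | j' < j ∧ airEntry K n j' k = true} (j - ν) :=
    ⟨⟨by omega, h2⟩, fun x hx => h3 x hx.1 hx.2⟩
  rw [dup, hg.csSup_eq]
  omega

lemma lam_zero (K D : ℕ) : lam K D 0 = D := rfl
lemma lamS_succ (K D s : ℕ) : lamS K D (s + 1) = lam K D s := rfl
lemma lam_succ (K D s : ℕ) :
    lam K D (s + 1) = if lam K D s = 0 then 0 else lamS K D s % lam K D s := rfl

lemma lam_step {K D s : ℕ} (h : lam K D (s + 1) ≠ 0) :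
    lam K D (s + 2) = lam K D s % lam K D (s + 1) := by
  rw [show s + 2 = (s + 1) + 1 from rfl, lam_succ, if_neg h, lamS_succ]

lemma transferA {K D : ℕ} (hD : 0 < D) (h : D < K - D) :
    ∀ s, (∀ j ≤ s, lam K D j ≠ 0) →
      nu K (K - D) (s + 2) = lam K D s ∧ nu K (K - D) (s + 3) = lam K D (s + 1) := by
  have hK2 : K - D ≤ K := by omega
  have e2 : nu K (K - D) 2 = D := by
    have h5 : (K - D + D) % (K - D) = D % (K - D) := Nat.add_mod_left _ _
    rw [show K - D + D = K from by omega] at h5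
    rw [nu_two hK2, h5, Nat.mod_eq_of_lt h]
  intro s
  induction s with
  | zero =>
    intro hz
    refine ⟨e2, ?_⟩
    have e3 : nu K (K - D) 3 = nu K (K - D) 1 % nu K (K - D) 2 := rfl
    rw [e3, nu_one, e2, lam_succ, if_neg (hz 0 le_rfl)]
    rfl
  | succ s ih =>
    intro hz
    obtain ⟨ih1, ih2⟩ := ih (fun j hj => hz j (by omega))
    refine ⟨ih2, ?_⟩
    calc nu K (K - D) (s + 1 + 3)
        = nu K (K - D) (s + 2) % nu K (K - D) (s + 2 + 1) := nu_rec _ _ (s + 2)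
      _ = lam K D s % lam K D (s + 1) := by
          rw [show s + 2 + 1 = s + 3 from rfl, ih1, ih2]
      _ = lam K D (s + 1 + 1) := (lam_step (hz (s + 1) (by omega))).symm

lemma transferB {K D : ℕ} (hD : 0 < D) (hDK : D < K) (h : K - D < D) :
    ∀ s, (∀ j ≤ s, lam K D j ≠ 0) →
      nu K (K - D) s = lam K D s ∧ nu K (K - D) (s + 1) = lam K D (s + 1) := by
  intro s
  induction s with
  | zero =>
    intro hz
    constructor
    · rw [nu_zero, lam_zero]; omega
    · rw [nu_one, lam_succ, if_neg (hz 0 le_rfl), lam_zero]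
      show K - D = lamS K D 0 % D
      rw [show lamS K D 0 = K - D from rfl, Nat.mod_eq_of_lt h]
  | succ s ih =>
    intro hz
    obtain ⟨ih1, ih2⟩ := ih (fun j hj => hz j (by omega))
    refine ⟨ih2, ?_⟩
    calc nu K (K - D) (s + 1 + 1)
        = nu K (K - D) s % nu K (K - D) (s + 1) := nu_rec _ _ s
      _ = lam K D s % lam K D (s + 1) := by rw [ih1, ih2]
      _ = lam K D (s + 1 + 1) := (lam_step (hz (s + 1) (by omega))).symm

/-- Lemma 2 (odd submatrix): up-distance of an entry in I_{β_{2i+1}λ_{2i+1} × λ_{2i+1}}. -/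
theorem stmt6 (K D l i j k : ℕ) (hD : 0 < D) (hDK : D < K)
    (hl : lam K D (l + 1) = 0) (hmin : ∀ j ≤ l, lam K D j ≠ 0)
    (hi : 2 * i + 1 ≤ l)
    (hj1 : K - lam K D (2 * i) ≤ j) (hj2 : j < K - lam K D (2 * i + 2))
    (hk1 : K - D - lam K D (2 * i + 1) ≤ k) (hk2 : k < K - D)
    (he : airEntry K (K - D) j k = true) :
    dup K (K - D) j k = lam K D (2 * i + 1) := by
  have h0 : 0 < K - D := by omega
  have h1 : K - D < K := by omega
  have hne : ∀ j ≤ 2 * i + 1, lam K D j ≠ 0 := fun j hj => hmin j (by omega)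
  have hν0 : 0 < lam K D (2 * i + 1) := Nat.pos_of_ne_zero (hne _ le_rfl)
  rcases lt_trichotomy D (K - D) with hA | hE | hB
  · -- case D < K - D : use level t = i + 1
    obtain ⟨eA1, eA2⟩ := transferA hD hA (2 * i) (fun j hj => hne j (by omega))
    obtain ⟨eB1, eB2⟩ := transferA hD hA (2 * i + 1) hne
    have hpos : ∀ s ≤ 2 * (i + 1) + 1, 0 < nu K (K - D) s := by
      intro s hs
      match s with
      | 0 => rw [nu_zero]; omega
      | 1 => rw [nu_one]; omega
      | s + 2 =>
        have hs' : s ≤ 2 * i + 1 := by omega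
        have := (transferA hD hA s (fun j hj => hne j (by omega))).1
        rw [this]
        exact Nat.pos_of_ne_zero (hne s hs')
    obtain ⟨g1, g2, g3⟩ := air_up (i + 1) K (K - D) j k h0 h1 hpos
      (by rw [show 2 * (i + 1) = 2 * i + 2 from by ring, eA1]; exact hj1)
      (by rw [show 2 * (i + 1) + 2 = (2 * i + 1) + 3 from by ring, eB2]; exact hj2)
      (by rw [show 2 * (i + 1) + 1 = 2 * i + 3 from by ring, eB1]; exact hk1)
      hk2 he
    rw [show 2 * (i + 1) + 1 = 2 * i + 3 from by ring, eB1] at g1 g2 g3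
    exact dup_eq g1 hν0 g2 g3
  · -- case D = K - D : impossible, since then λ₁ = 0
    exfalso
    have hlam1 : lam K D 1 = 0 := by
      have h : lam K D 1 = if D = 0 then 0 else (K - D) % D := rfl
      rw [h, if_neg (by omega : ¬ D = 0), ← hE, Nat.mod_self]
    rcases Nat.eq_zero_or_pos l with hl0 | hl1
    · omega
    · exact hmin 1 (by omega) hlam1
  · -- case K - D < D : use level t = i
    obtain ⟨eA1, eA2⟩ := transferB hD hDK hB (2 * i) (fun j hj => hne j (by omega))
    obtain ⟨eB1, eB2⟩ := transferB hD hDK hB (2 * i + 1) hne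
    have hpos : ∀ s ≤ 2 * i + 1, 0 < nu K (K - D) s := by
      intro s hs
      have := (transferB hD hDK hB s (fun j hj => hne j (by omega))).1
      rw [this]
      exact Nat.pos_of_ne_zero (hne s hs)
    obtain ⟨g1, g2, g3⟩ := air_up i K (K - D) j k h0 h1 hpos
      (by rw [eA1]; exact hj1)
      (by rw [show 2 * i + 2 = (2 * i + 1) + 1 from rfl, eB2]; exact hj2)
      (by rw [eA2]; exact hk1)
      hk2 he
    rw [eA2] at g1 g2 g3
    exact dup_eq g1 hν0 g2 g3
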